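/- arXiv:1503.02993 — 4 statements merged into one kernel-verified Lean document; each statement's English description precedes it below -/
import Mathlib

section
/- For every natural number n ≥ 1, the map sending a tuple (w₂, w₃, …, wₙ), where each wₖ is a (k−1,1)-shuffle in the permutations of Fin k, to the permutation Eₙ(wₙ) ∘ Eₙ₋₁(wₙ₋₁) ∘ ⋯ ∘ E₂(w₂) of Fin n, is a bijection from the product of the sets of (k−1,1)-shuffles (for k = 2, …, n) onto the full symmetric group of permutations of Fin n. (For n = 1 the empty tuple is sent to the identity permutation.) -/
/-- A `(p,q)`-shuffle: a permutation of `Fin (p+q)` that is strictly increasing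
on the first `p` positions and strictly increasing on the last `q` positions. -/
def IsShuffle (p q : ℕ) (w : Equiv.Perm (Fin (p + q))) : Prop :=
  (∀ i j : Fin (p + q), (i : ℕ) < j → (j : ℕ) < p → w i < w j) ∧
  (∀ i j : Fin (p + q), p ≤ (i : ℕ) → (i : ℕ) < j → w i < w j)

/-- `Eₖ(w)`: the permutation of `Fin n` acting as `w` on the first `k` positions and as the
identity on the remaining `n - k` positions, obtained by conjugating
`Equiv.sumCongr w (Equiv.refl (Fin (n-k)))` by the canonical equivalence
`Fin k ⊕ Fin (n-k) ≃ Fin n`. -/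
def extendPerm (n k : ℕ) (h : k ≤ n) (w : Equiv.Perm (Fin k)) : Equiv.Perm (Fin n) :=
  (finSumFinEquiv.trans (finCongr (Nat.add_sub_cancel' h))).permCongr
    (w.sumCongr (Equiv.refl (Fin (n - k))))

lemma extendPerm_apply_lt {n k : ℕ} (h : k ≤ n) (w : Equiv.Perm (Fin k)) (i : Fin n)
    (hi : (i : ℕ) < k) : extendPerm n k h w i = Fin.castLE h (w ⟨i, hi⟩) := by
  simp only [extendPerm, Equiv.permCongr_apply, Equiv.trans_apply, Equiv.symm_trans_apply,
    finCongr_symm, finCongr_apply]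
  have e1 : Fin.cast (Nat.add_sub_cancel' h).symm i = Fin.castAdd (n - k) ⟨i, hi⟩ :=
    Fin.ext rfl
  rw [e1, finSumFinEquiv_symm_apply_castAdd]
  simp only [Equiv.sumCongr_apply, Sum.map_inl, finSumFinEquiv_apply_left]
  exact Fin.ext rfl

lemma extendPerm_apply_ge {n k : ℕ} (h : k ≤ n) (w : Equiv.Perm (Fin k)) (i : Fin n)
    (hi : k ≤ (i : ℕ)) : extendPerm n k h w i = i := by
  simp only [extendPerm, Equiv.permCongr_apply, Equiv.trans_apply, Equiv.symm_trans_apply,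
    finCongr_symm, finCongr_apply]
  have e1 : Fin.cast (Nat.add_sub_cancel' h).symm i =
      Fin.natAdd k ⟨(i : ℕ) - k, by have := i.isLt; omega⟩ :=
    Fin.ext (by simp; omega)
  rw [e1, finSumFinEquiv_symm_apply_natAdd]
  simp only [Equiv.sumCongr_apply, Sum.map_inr, Equiv.refl_apply, finSumFinEquiv_apply_right]
  exact Fin.ext (by simp; omega)

lemma extendPerm_mul {n k : ℕ} (h : k ≤ n) (w w' : Equiv.Perm (Fin k)) :
    extendPerm n k h (w * w') = extendPerm n k h w * extendPerm n k h w' := by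
  ext i
  by_cases hi : (i : ℕ) < k
  · rw [Equiv.Perm.mul_apply, extendPerm_apply_lt h _ i hi, extendPerm_apply_lt h w' i hi]
    rw [extendPerm_apply_lt h w _ (by simpa using (w' ⟨i, hi⟩).isLt)]
    rfl
  · push_neg at hi
    rw [Equiv.Perm.mul_apply, extendPerm_apply_ge h _ i hi, extendPerm_apply_ge h w' i hi,
      extendPerm_apply_ge h w i hi]

lemma extendPerm_trans {n m k : ℕ} (h1 : k ≤ m) (h2 : m ≤ n) (w : Equiv.Perm (Fin k)) :
    extendPerm n m h2 (extendPerm m k h1 w) = extendPerm n k (h1.trans h2) w := by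
  ext i
  by_cases hi : (i : ℕ) < k
  · rw [extendPerm_apply_lt h2 _ i (lt_of_lt_of_le hi h1),
      extendPerm_apply_lt (h1.trans h2) w i hi,
      extendPerm_apply_lt h1 w _ (by exact hi)]
    rfl
  · push_neg at hi
    by_cases hi2 : (i : ℕ) < m
    · rw [extendPerm_apply_lt h2 _ i hi2, extendPerm_apply_ge (h1.trans h2) w i hi,
        extendPerm_apply_ge h1 w _ (by exact hi)]
      rfl
    · push_neg at hi2
      rw [extendPerm_apply_ge h2 _ i hi2, extendPerm_apply_ge (h1.trans h2) w i hi]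

lemma extendPerm_self {n : ℕ} (h : n ≤ n) (w : Equiv.Perm (Fin n)) :
    extendPerm n n h w = w := by
  ext i
  rw [extendPerm_apply_lt h w i i.isLt]
  rfl

lemma extendPerm_injective {n k : ℕ} (h : k ≤ n) :
    Function.Injective (extendPerm n k h) := by
  intro w w' hww
  ext i
  have := Equiv.ext_iff.mp hww (Fin.castLE h i)
  rw [extendPerm_apply_lt h w _ (by simpa using i.isLt),
    extendPerm_apply_lt h w' _ (by simpa using i.isLt)] at this
  have : w ⟨(Fin.castLE h i : ℕ), _⟩ = w' ⟨(Fin.castLE h i : ℕ), _⟩ := Fin.castLE_injective h this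
  have e : (⟨(Fin.castLE h i : ℕ), by simpa using i.isLt⟩ : Fin k) = i := Fin.ext rfl
  rw [e] at this
  exact congrArg Fin.val this

def shuffleOf (p : ℕ) (j : Fin (p + 1)) : Equiv.Perm (Fin (p + 1)) :=
  (finSuccEquiv' (Fin.last p)).trans (finSuccEquiv' j).symm

lemma shuffleOf_last {p : ℕ} (j : Fin (p + 1)) : shuffleOf p j (Fin.last p) = j := by
  simp [shuffleOf, finSuccEquiv'_at, finSuccEquiv'_symm_none]

lemma shuffleOf_castSucc {p : ℕ} (j : Fin (p + 1)) (i : Fin p) :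
    shuffleOf p j (Fin.castSucc i) = j.succAbove i := by
  simp only [shuffleOf, Equiv.trans_apply]
  rw [← Fin.succAbove_last, finSuccEquiv'_succAbove, finSuccEquiv'_symm_some]

lemma isShuffle_shuffleOf {p : ℕ} (j : Fin (p + 1)) : IsShuffle p 1 (shuffleOf p j) := by
  constructor
  · intro a b hab hb
    have ha : (a : ℕ) < p := hab.trans hb
    have ea : a = Fin.castSucc ⟨a, ha⟩ := Fin.ext rfl
    have eb : b = Fin.castSucc ⟨b, hb⟩ := Fin.ext rfl
    rw [ea, eb, shuffleOf_castSucc, shuffleOf_castSucc]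
    exact Fin.strictMono_succAbove j hab
  · intro a b ha hab
    have := b.isLt
    omega

lemma shuffle_eq {p : ℕ} {w : Equiv.Perm (Fin (p + 1))} (hw : IsShuffle p 1 w) :
    w = shuffleOf p (w (Fin.last p)) := by
  set j := w (Fin.last p) with hj
  have hmono : StrictMono (fun i : Fin p => w (Fin.castSucc i)) := by
    intro a b hab
    exact hw.1 _ _ (by simpa using hab) (by simpa using b.isLt)
  have hmono' : StrictMono (fun i : Fin p => shuffleOf p j (Fin.castSucc i)) := by
    intro a b hab
    simp only [shuffleOf_castSucc]
    exact Fin.strictMono_succAbove j hab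
  have hrange : Set.range (fun i : Fin p => w (Fin.castSucc i)) =
      Set.range (fun i : Fin p => shuffleOf p j (Fin.castSucc i)) := by
    have h1 : Set.range (fun i : Fin p => w (Fin.castSucc i)) = {j}ᶜ := by
      ext x
      simp only [Set.mem_range, Set.mem_compl_iff, Set.mem_singleton_iff]
      constructor
      · rintro ⟨i, rfl⟩ hx
        exact absurd (w.injective hx) (Fin.ne_last_of_lt (Fin.castSucc_lt_last i))
      · intro hx
        obtain ⟨y, rfl⟩ := w.surjective x
        have hy : y ≠ Fin.last p := fun h => hx (by rw [h])
        have hylt : (y : ℕ) < p := by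
          have := y.isLt; rcases Nat.lt_or_ge (y : ℕ) p with h | h
          · exact h
          · exact absurd (Fin.ext (by simp [Fin.val_last]; omega) : y = Fin.last p) hy
        exact ⟨⟨y, hylt⟩, congrArg w (Fin.ext rfl)⟩
    have h2 : Set.range (fun i : Fin p => shuffleOf p j (Fin.castSucc i)) = {j}ᶜ := by
      have : (fun i : Fin p => shuffleOf p j (Fin.castSucc i)) = j.succAbove := by
        funext i; exact shuffleOf_castSucc j i
      rw [this, Fin.range_succAbove]
    rw [h1, h2]
  haveI : WellFoundedLT (Fin p) := inferInstance
  have hfun := (StrictMono.range_inj (β := Fin p) (γ := Fin (p+1)) hmono hmono').1 hrange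
  ext x
  induction x using Fin.lastCases with
  | last => rw [shuffleOf_last]
  | cast i => exact congrArg Fin.val (congrFun hfun i)

lemma extendPerm_one {n k : ℕ} (h : k ≤ n) : extendPerm n k h 1 = 1 := by
  ext i
  by_cases hi : (i : ℕ) < k
  · rw [extendPerm_apply_lt h _ i hi]; rfl
  · rw [extendPerm_apply_ge h _ i (le_of_not_gt hi)]; rfl

lemma extendPerm_list_prod {n k : ℕ} (h : k ≤ n) (l : List (Equiv.Perm (Fin k))) :
    (l.map (extendPerm n k h)).prod = extendPerm n k h l.prod := by
  induction l with
  | nil => simp [extendPerm_one]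
  | cons a l ih => rw [List.map_cons, List.prod_cons, List.prod_cons, extendPerm_mul, ih]

def extendHom (n k : ℕ) (h : k ≤ n) : Equiv.Perm (Fin k) →* Equiv.Perm (Fin n) where
  toFun := extendPerm n k h
  map_one' := by
    ext i
    by_cases hi : (i : ℕ) < k
    · rw [extendPerm_apply_lt h _ i hi]; rfl
    · rw [extendPerm_apply_ge h _ i (le_of_not_gt hi)]; rfl
  map_mul' := extendPerm_mul h

lemma exists_extend_of_fix_last {p : ℕ} (ρ : Equiv.Perm (Fin (p + 1)))
    (hρ : ρ (Fin.last p) = Fin.last p) :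
    ∃ σ : Equiv.Perm (Fin p), extendPerm (p + 1) p (Nat.le_succ p) σ = ρ := by
  have hρinv : ρ⁻¹ (Fin.last p) = Fin.last p := by
    conv_lhs => rw [← hρ]
    exact ρ.symm_apply_apply _
  have lt1 : ∀ i : Fin p, ((ρ (Fin.castSucc i)) : ℕ) < p := by
    intro i
    by_contra hcon
    have h1 : ρ (Fin.castSucc i) = Fin.last p :=
      Fin.ext (by have := (ρ (Fin.castSucc i)).isLt; simp [Fin.val_last]; omega)
    have := ρ.injective (h1.trans hρ.symm)
    have := congrArg Fin.val this
    simp [Fin.val_last] at this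
    omega
  have lt2 : ∀ i : Fin p, ((ρ⁻¹ (Fin.castSucc i)) : ℕ) < p := by
    intro i
    by_contra hcon
    have h1 : ρ⁻¹ (Fin.castSucc i) = Fin.last p :=
      Fin.ext (by have := (ρ⁻¹ (Fin.castSucc i)).isLt; simp only [Fin.val_last]; omega)
    have := ρ⁻¹.injective (h1.trans hρinv.symm)
    have := congrArg Fin.val this
    simp [Fin.val_last] at this
    omega
  have key : ∀ (x : Fin (p + 1)) (hx : (x : ℕ) < p), Fin.castSucc ⟨(x : ℕ), hx⟩ = x :=
    fun x hx => Fin.ext rfl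
  refine ⟨{ toFun := fun i => ⟨ρ (Fin.castSucc i), lt1 i⟩,
            invFun := fun i => ⟨ρ⁻¹ (Fin.castSucc i), lt2 i⟩,
            left_inv := ?_, right_inv := ?_ }, ?_⟩
  · intro i
    apply Fin.ext
    show ((ρ⁻¹ (Fin.castSucc ⟨(ρ (Fin.castSucc i) : ℕ), lt1 i⟩)) : ℕ) = (i : ℕ)
    rw [key _ (lt1 i), Equiv.Perm.coe_inv, ρ.symm_apply_apply]
    rfl
  · intro i
    apply Fin.ext
    show ((ρ (Fin.castSucc ⟨(ρ⁻¹ (Fin.castSucc i) : ℕ), lt2 i⟩)) : ℕ) = (i : ℕ)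
    rw [key _ (lt2 i), Equiv.Perm.coe_inv, ρ.apply_symm_apply]
    rfl
  · ext i
    by_cases hi : (i : ℕ) < p
    · rw [extendPerm_apply_lt _ _ i hi]
      show ((ρ (Fin.castSucc ⟨(i : ℕ), hi⟩)) : ℕ) = _
      rw [key i hi]
    · rw [extendPerm_apply_ge _ _ i (le_of_not_gt hi)]
      have : i = Fin.last p := Fin.ext (by have := i.isLt; simp [Fin.val_last]; omega)
      rw [this, hρ]

lemma shuffle_ext {p : ℕ} {w w' : Equiv.Perm (Fin (p + 1))} (hw : IsShuffle p 1 w)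
    (hw' : IsShuffle p 1 w') (h : w (Fin.last p) = w' (Fin.last p)) : w = w' := by
  rw [shuffle_eq hw, shuffle_eq hw', h]

lemma main_bij : ∀ m : ℕ, Function.Bijective
    (fun ws : (∀ i : Fin m, {w : Equiv.Perm (Fin (i.1 + 1 + 1)) //
        IsShuffle (i.1 + 1) 1 w}) =>
      ((List.ofFn (fun i : Fin m =>
        extendPerm (m + 1) (i.1 + 2) (by have := i.isLt; omega) (ws i).1)).reverse.prod :
          Equiv.Perm (Fin (m + 1)))) := by
  intro m
  induction m with
  | zero =>
    haveI : Subsingleton (Equiv.Perm (Fin (0 + 1))) := by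
      constructor
      intro a b
      ext x
      have h1 := (a x).isLt
      have h2 := (b x).isLt
      omega
    constructor
    · intro a b _
      funext i
      exact i.elim0
    · intro τ
      exact ⟨fun i => i.elim0, Subsingleton.elim _ _⟩
  | succ m ih =>
    have decomp : ∀ ws : (∀ i : Fin (m + 1), {w : Equiv.Perm (Fin (i.1 + 1 + 1)) //
        IsShuffle (i.1 + 1) 1 w}),
        ((List.ofFn (fun i : Fin (m + 1) =>
          extendPerm (m + 1 + 1) (i.1 + 2) (by have := i.isLt; omega) (ws i).1)).reverse.prod :
            Equiv.Perm (Fin (m + 1 + 1))) =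
        (show Equiv.Perm (Fin (m + 1 + 1)) from (ws (Fin.last m)).1) *
          extendPerm (m + 1 + 1) (m + 1) (by omega)
            ((List.ofFn (fun i : Fin m =>
              extendPerm (m + 1) (i.1 + 2) (by have := i.isLt; omega)
                (ws i.castSucc).1)).reverse.prod) := by
      intro ws
      rw [List.ofFn_succ', List.concat_eq_append, List.reverse_append, List.reverse_singleton,
        List.singleton_append, List.prod_cons]
      congr 1
      · exact extendPerm_self (n := m + 2) le_rfl _
      · have hcomp : (fun i : Fin m =>
            extendPerm (m + 1 + 1) ((i.castSucc).1 + 2) (by have := i.castSucc.isLt; omega)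
              (ws i.castSucc).1) =
            (fun i : Fin m => extendPerm (m + 1 + 1) (m + 1) (by omega)
              (extendPerm (m + 1) (i.1 + 2) (by have := i.isLt; omega)
                (ws i.castSucc).1)) := by
          funext i
          exact (extendPerm_trans (by have := i.isLt; simp only [Fin.coe_castSucc]; omega)
            (by omega) _).symm
        rw [hcomp]
        have hmap : List.ofFn (fun i : Fin m =>
            extendPerm (m + 1 + 1) (m + 1) (by omega : m + 1 ≤ m + 1 + 1)
              (extendPerm (m + 1) (i.1 + 2) (by have := i.isLt; omega) (ws i.castSucc).1)) =
            (List.ofFn (fun i : Fin m =>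
              extendPerm (m + 1) (i.1 + 2) (by have := i.isLt; omega) (ws i.castSucc).1)).map
              (extendPerm (m + 1 + 1) (m + 1) (by omega)) := by
          rw [List.map_ofFn]
          rfl
        rw [hmap, ← List.map_reverse, extendPerm_list_prod]
    constructor
    · intro ws ws' heq
      simp only at heq
      rw [decomp ws, decomp ws'] at heq
      have hlast : (ws (Fin.last m)).1 (Fin.last (m + 1)) =
          (ws' (Fin.last m)).1 (Fin.last (m + 1)) := by
        have h1 := Equiv.ext_iff.mp heq (Fin.last (m + 1))
        rw [Equiv.Perm.mul_apply, Equiv.Perm.mul_apply,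
          extendPerm_apply_ge _ _ _ (by simp [Fin.val_last]),
          extendPerm_apply_ge _ _ _ (by simp [Fin.val_last])] at h1
        exact h1
      have hw : (ws (Fin.last m)).1 = (ws' (Fin.last m)).1 :=
        shuffle_ext (p := m + 1) (ws (Fin.last m)).2 (ws' (Fin.last m)).2 hlast
      rw [hw] at heq
      have hrest := mul_left_cancel heq
      have hσ := extendPerm_injective (n := m + 1 + 1) (k := m + 1) (by omega) hrest
      have htuple := ih.injective hσ
      funext i
      induction i using Fin.lastCases with
      | last => exact Subtype.ext hw
      | cast i => exact congrFun htuple i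
    · intro τ
      set j : Fin (m + 1 + 1) := τ (Fin.last (m + 1)) with hj
      have hfix : ((shuffleOf (m + 1) j)⁻¹ * τ) (Fin.last (m + 1)) = Fin.last (m + 1) := by
        rw [Equiv.Perm.mul_apply]
        have hh : τ (Fin.last (m + 1)) = shuffleOf (m + 1) j (Fin.last (m + 1)) :=
          (shuffleOf_last j).symm
        rw [hh, Equiv.Perm.coe_inv, Equiv.symm_apply_apply]
      obtain ⟨σ, hσ⟩ := exists_extend_of_fix_last ((shuffleOf (m + 1) j)⁻¹ * τ) hfix
      obtain ⟨ws', hws'⟩ := ih.surjective σ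
      refine ⟨Fin.lastCases (motive := fun i : Fin (m + 1) =>
        {w : Equiv.Perm (Fin (i.1 + 1 + 1)) // IsShuffle (i.1 + 1) 1 w})
        ⟨shuffleOf (m + 1) j, isShuffle_shuffleOf j⟩ ws', ?_⟩
      simp only
      rw [decomp]
      simp only [Fin.lastCases_last, Fin.lastCases_castSucc]
      simp only at hws'
      rw [hws', hσ]
      exact mul_inv_cancel_left _ _

/-- The map sending a tuple `(w₂, …, wₙ)` of shuffles, where `wₖ` is a `(k-1,1)`-shuffle in
`S_k`, to `Eₙ(wₙ) ∘ Eₙ₋₁(wₙ₋₁) ∘ ⋯ ∘ E₂(w₂)`, is a bijection onto the symmetric group `S_n`.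
(Here the index `i : Fin (n-1)` corresponds to `k = i + 2`.) -/
theorem shuffle_tuples_bijective_symmetric_group (n : ℕ) (hn : 1 ≤ n) :
    Function.Bijective
      (fun ws : (∀ i : Fin (n - 1), {w : Equiv.Perm (Fin (i.1 + 1 + 1)) //
          IsShuffle (i.1 + 1) 1 w}) =>
        ((List.ofFn (fun i : Fin (n - 1) =>
          extendPerm n (i.1 + 2) (by have := i.isLt; omega) (ws i).1)).reverse.prod :
            Equiv.Perm (Fin n))) := by
  obtain ⟨m, rfl⟩ : ∃ m, n = m + 1 := ⟨n - 1, by omega⟩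
  exact main_bij m
end

section
/- There exists exactly one ℚ-bilinear map m : V → V → V (where V is the free ℚ-module on planar binary trees) such that: (i) m(δ_t, δ_nil) = δ_t and m(δ_nil, δ_t) = δ_t for every planar binary tree t; and (ii) for all planar binary trees t₁, t₂, t₁', t₂', writing t = node () t₁ t₂ and t' = node () t₁' t₂', one has m(δ_t, δ_{t'}) = L_{t₁}(m(δ_{t₂}, δ_{t'})) + R_{t₂'}(m(δ_t, δ_{t₁'})). -/
/-- The free ℚ-module on planar binary trees. -/
abbrev V : Type := Tree Unit →₀ ℚ

/-- The basis vector of `V` corresponding to the planar binary tree `t`. -/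
noncomputable def δ (t : Tree Unit) : V := Finsupp.single t 1

/-- `L_u`: the linear map determined on basis vectors by `δ s ↦ δ (node () u s)`. -/
noncomputable def Ltree (u : Tree Unit) : V →ₗ[ℚ] V :=
  Finsupp.lmapDomain ℚ ℚ (fun s => Tree.node () u s)

/-- `R_u`: the linear map determined on basis vectors by `δ s ↦ δ (node () s u)`. -/
noncomputable def Rtree (u : Tree Unit) : V →ₗ[ℚ] V :=
  Finsupp.lmapDomain ℚ ℚ (fun s => Tree.node () s u)

/-- A bilinear map `m` on `V` is a Loday–Ronco product if `δ nil` is a two-sided unit and `m`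
satisfies the identity `t ∗ t' = t₁ ∨ (t₂ ∗ t') + (t ∗ t₁') ∨ t₂'` on basis vectors. -/
def IsLodayRoncoProduct (m : V →ₗ[ℚ] V →ₗ[ℚ] V) : Prop :=
  (∀ t : Tree Unit, m (δ t) (δ Tree.nil) = δ t ∧ m (δ Tree.nil) (δ t) = δ t) ∧
  (∀ t₁ t₂ t₁' t₂' : Tree Unit,
    m (δ (Tree.node () t₁ t₂)) (δ (Tree.node () t₁' t₂')) =
      Ltree t₁ (m (δ t₂) (δ (Tree.node () t₁' t₂'))) +
      Rtree t₂' (m (δ (Tree.node () t₁ t₂)) (δ t₁')))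

noncomputable def lrMul : Tree Unit → Tree Unit → V
  | .nil, t' => δ t'
  | .node u t₁ t₂, .nil => δ (.node u t₁ t₂)
  | .node _ t₁ t₂, .node _ t₁' t₂' =>
      Ltree t₁ (lrMul t₂ (.node () t₁' t₂')) + Rtree t₂' (lrMul (.node () t₁ t₂) t₁')
termination_by t t' => t.numNodes + t'.numNodes
decreasing_by all_goals (simp [Tree.numNodes] <;> omega)

lemma lrMul_nil_left (t : Tree Unit) : lrMul .nil t = δ t := by
  cases t <;> simp [lrMul]

lemma lrMul_nil_right (t : Tree Unit) : lrMul t .nil = δ t := by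
  cases t <;> simp [lrMul]

noncomputable def lrM : V →ₗ[ℚ] V →ₗ[ℚ] V :=
  Finsupp.lsum ℚ (fun t => LinearMap.toSpanSingleton ℚ _
    (Finsupp.lsum ℚ (fun t' => LinearMap.toSpanSingleton ℚ V (lrMul t t'))))

lemma lrM_delta (t t' : Tree Unit) : lrM (δ t) (δ t') = lrMul t t' := by
  simp [lrM, δ]

lemma lr_uniq (m m' : V →ₗ[ℚ] V →ₗ[ℚ] V) (hm : IsLodayRoncoProduct m)
    (hm' : IsLodayRoncoProduct m') : ∀ n t t', t.numNodes + t'.numNodes ≤ n →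
    m (δ t) (δ t') = m' (δ t) (δ t') := by
  intro n
  induction n with
  | zero =>
    intro t t' h
    cases t <;> cases t' <;> simp_all [Tree.numNodes, hm.1, hm'.1]
  | succ n ih =>
    intro t t' h
    match t, t' with
    | .nil, t' => rw [(hm.1 t').2, (hm'.1 t').2]
    | t, .nil => rw [(hm.1 t).1, (hm'.1 t).1]
    | .node u t₁ t₂, .node u' t₁' t₂' =>
      cases u; cases u'
      rw [hm.2, hm'.2, ih t₂ (.node () t₁' t₂') (by simp [Tree.numNodes] at h ⊢; omega),
        ih (.node () t₁ t₂) t₁' (by simp [Tree.numNodes] at h ⊢; omega)]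

/-- There is exactly one Loday–Ronco product on `V`. -/
theorem existsUnique_lodayRoncoProduct :
    ∃! m : V →ₗ[ℚ] V →ₗ[ℚ] V, IsLodayRoncoProduct m := by
  refine ⟨lrM, ⟨?_, ?_⟩, ?_⟩
  · intro t
    constructor
    · rw [lrM_delta, lrMul_nil_right]
    · rw [lrM_delta, lrMul_nil_left]
  · intro t₁ t₂ t₁' t₂'
    rw [lrM_delta, lrM_delta, lrM_delta, lrMul]
  · intro m hm
    apply Finsupp.lhom_ext'
    intro t
    apply LinearMap.ext_ring
    apply Finsupp.lhom_ext'
    intro t'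
    apply LinearMap.ext_ring
    simp only [LinearMap.comp_apply, Finsupp.lsingle_apply]
    exact lr_uniq m lrM hm ⟨fun t => ⟨by rw [lrM_delta, lrMul_nil_right], by rw [lrM_delta, lrMul_nil_left]⟩,
      fun a b c d => by rw [lrM_delta, lrM_delta, lrM_delta, lrMul]⟩ _ t t' le_rfl
end

section
/- Any Loday–Ronco product m on the free ℚ-module V on planar binary trees is associative: for all x, y, z ∈ V, m(m(x, y), z) = m(x, m(y, z)). -/
/-- The grafting operation `δ a ↦ δ b ↦ δ (node () a b)`, extended bilinearly. -/
noncomputable def G : V →ₗ[ℚ] V →ₗ[ℚ] V :=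
  Finsupp.lsum ℚ fun a => LinearMap.toSpanSingleton ℚ (V →ₗ[ℚ] V) (Ltree a)

lemma single_eq (x : Tree Unit) (r : ℚ) : Finsupp.single x r = r • δ x := by
  simp [δ, Finsupp.smul_single]

lemma G_delta (a : Tree Unit) : G (δ a) = Ltree a := by
  simp [G, δ, Finsupp.lsum_single, LinearMap.toSpanSingleton_apply]

lemma Ltree_delta (a b : Tree Unit) : Ltree a (δ b) = δ (Tree.node () a b) := by
  simp [Ltree, δ, Finsupp.lmapDomain_apply, Finsupp.mapDomain_single]

lemma G_dd (a b : Tree Unit) : G (δ a) (δ b) = δ (Tree.node () a b) := by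
  rw [G_delta, Ltree_delta]

lemma Rtree_eq (b : Tree Unit) (x : V) : Rtree b x = G x (δ b) := by
  induction x using Finsupp.induction_linear with
  | zero => simp
  | add u v hu hv => simp only [map_add, LinearMap.add_apply, hu, hv]
  | single a r =>
    rw [single_eq, map_smul, map_smul, LinearMap.smul_apply, G_dd]
    simp [Rtree, δ, Finsupp.mapDomain_single]

variable {m : V →ₗ[ℚ] V →ₗ[ℚ] V}

lemma m_nil_right (hm : IsLodayRoncoProduct m) (x : V) : m x (δ Tree.nil) = x := by
  induction x using Finsupp.induction_linear with
  | zero => simp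
  | add u v hu hv => simp only [map_add, LinearMap.add_apply, hu, hv]
  | single a r => rw [single_eq, map_smul, LinearMap.smul_apply, (hm.1 a).1]

lemma m_nil_left (hm : IsLodayRoncoProduct m) (x : V) : m (δ Tree.nil) x = x := by
  induction x using Finsupp.induction_linear with
  | zero => simp
  | add u v hu hv => simp only [map_add, hu, hv]
  | single a r => rw [single_eq, map_smul, (hm.1 a).2]

/-- The recursion, on basis vectors, phrased via `G`. -/
lemma recG (hm : IsLodayRoncoProduct m) (a b c d : Tree Unit) :
    m (G (δ a) (δ b)) (G (δ c) (δ d)) =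
      G (δ a) (m (δ b) (G (δ c) (δ d))) + G (m (G (δ a) (δ b)) (δ c)) (δ d) := by
  rw [G_dd a b, G_dd c d, hm.2 a b c d, G_delta, Rtree_eq]

/-- The recursion extended multilinearly. -/
lemma star (hm : IsLodayRoncoProduct m) (a b c d : V) :
    m (G a b) (G c d) = G a (m b (G c d)) + G (m (G a b) c) d := by
  induction d using Finsupp.induction_linear with
  | zero => simp
  | add u v hu hv => simp only [map_add, LinearMap.add_apply, hu, hv]; abel
  | single d' r =>
  induction c using Finsupp.induction_linear with
  | zero => simp
  | add u v hu hv =>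
      simp only [map_add, LinearMap.add_apply, hu, hv]; abel
  | single c' q =>
  induction b using Finsupp.induction_linear with
  | zero => simp
  | add u v hu hv =>
      simp only [map_add, LinearMap.add_apply, hu, hv]; abel
  | single b' p =>
  induction a using Finsupp.induction_linear with
  | zero => simp
  | add u v hu hv =>
      simp only [map_add, LinearMap.add_apply, hu, hv]; abel
  | single a' o =>
    simp only [single_eq, map_smul, LinearMap.smul_apply, smul_add, recG hm a' b' c' d']

lemma massoc_basis (hm : IsLodayRoncoProduct m) :
    ∀ n : ℕ, ∀ t s u : Tree Unit, t.numNodes + s.numNodes + u.numNodes ≤ n →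
      m (m (δ t) (δ s)) (δ u) = m (δ t) (m (δ s) (δ u)) := by
  intro n
  induction n using Nat.strong_induction_on with
  | _ n IH =>
  intro t s u h
  cases t with
  | nil => rw [m_nil_left hm, m_nil_left hm]
  | node a t₁ t₂ =>
  cases s with
  | nil => rw [m_nil_right hm, m_nil_left hm]
  | node b s₁ s₂ =>
  cases u with
  | nil => rw [m_nil_right hm, m_nil_right hm]
  | node c u₁ u₂ =>
  obtain ⟨⟩ := a; obtain ⟨⟩ := b; obtain ⟨⟩ := c
  simp only [Tree.numNodes, BinaryTree.numNodes] at h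
  set A := δ t₁; set B := δ t₂; set C := δ s₁; set D := δ s₂; set E := δ u₁; set F := δ u₂
  have ht : δ (Tree.node () t₁ t₂) = G A B := (G_dd t₁ t₂).symm
  have hs : δ (Tree.node () s₁ s₂) = G C D := (G_dd s₁ s₂).symm
  have hu : δ (Tree.node () u₁ u₂) = G E F := (G_dd u₁ u₂).symm
  have IH1 := IH (n - 1) (by omega) t₂ (Tree.node () s₁ s₂) (Tree.node () u₁ u₂)
    (by simp only [Tree.numNodes, BinaryTree.numNodes]; omega)
  have IH2 := IH (n - 1) (by omega) (Tree.node () t₁ t₂) (Tree.node () s₁ s₂) u₁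
    (by simp only [Tree.numNodes, BinaryTree.numNodes]; omega)
  rw [hs, hu] at IH1
  rw [ht, hs] at IH2
  rw [ht, hs, hu]
  have S1 := star hm A B C D
  have S2 := star hm C D E F
  have L : m (m (G A B) (G C D)) (G E F) =
      G A (m (m B (G C D)) (G E F)) + G (m (G A B) C) (m D (G E F))
      + G (m (m (G A B) (G C D)) E) F := by
    conv_lhs => rw [S1]
    conv_rhs => rw [S1]
    simp only [map_add, LinearMap.add_apply]
    rw [star hm A (m B (G C D)) E F, star hm (m (G A B) C) D E F]
    abel
  have R : m (G A B) (m (G C D) (G E F)) =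
      G A (m B (m (G C D) (G E F))) + G (m (G A B) C) (m D (G E F))
      + G (m (G A B) (m (G C D) E)) F := by
    conv_lhs => rw [S2]
    conv_rhs => rw [S2]
    simp only [map_add, LinearMap.add_apply]
    rw [star hm A B C (m D (G E F)), star hm A B (m (G C D) E) F]
    abel
  rw [L, IH1, IH2, R]

/-- Any Loday–Ronco product is associative. -/
theorem lodayRoncoProduct_assoc (m : V →ₗ[ℚ] V →ₗ[ℚ] V) (hm : IsLodayRoncoProduct m)
    (x y z : V) : m (m x y) z = m x (m y z) := by
  induction x using Finsupp.induction_linear with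
  | zero => simp
  | add u v hu hv => simp only [map_add, LinearMap.add_apply, hu, hv]
  | single a r =>
  induction y using Finsupp.induction_linear with
  | zero => simp
  | add u v hu hv => simp only [map_add, LinearMap.add_apply, hu, hv]
  | single b p =>
  induction z using Finsupp.induction_linear with
  | zero => simp
  | add u v hu hv => simp only [map_add, LinearMap.add_apply, hu, hv]
  | single c q =>
    simp only [single_eq, map_smul, LinearMap.smul_apply]
    rw [massoc_basis hm (a.numNodes + b.numNodes + c.numNodes) a b c le_rfl]
end

section
/- Let m be a Loday–Ronco product on the free ℚ-module V on planar binary trees, and let 𝟙 = δ_{node () nil nil} be the basis vector of the unique tree with one internal node. For every n ≥ 1, the support of the n-fold product m(⋯ m(m(𝟙, 𝟙), 𝟙) ⋯, 𝟙) (with n factors 𝟙) is exactly the set of planar binary trees with n internal nodes, and the coefficient of every such tree is a positive integer. -/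
/-- The `n`-fold product `m(⋯ m(m(𝟙, 𝟙), 𝟙) ⋯, 𝟙)` with `n` factors
`𝟙 = δ (node () nil nil)` (and the value `δ nil` for `n = 0`). -/
noncomputable def nfoldOne (m : V →ₗ[ℚ] V →ₗ[ℚ] V) : ℕ → V
  | 0 => δ Tree.nil
  | 1 => δ (Tree.node () Tree.nil Tree.nil)
  | n + 2 => m (nfoldOne m (n + 1)) (δ (Tree.node () Tree.nil Tree.nil))

/-- The set of trees obtained from `t` by inserting one node along the right spine. -/
def insS : Tree Unit → Finset (Tree Unit)
  | BinaryTree.nil => {Tree.node () Tree.nil Tree.nil}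
  | BinaryTree.node _ t₁ t₂ =>
      (insS t₂).image (Tree.node () t₁) ∪ {Tree.node () (Tree.node () t₁ t₂) Tree.nil}

lemma numNodes_of_mem_insS : ∀ t u : Tree Unit, u ∈ insS t → u.numNodes = t.numNodes + 1
  | BinaryTree.nil, u, h => by
    simp only [insS, Finset.mem_singleton] at h
    subst h; rfl
  | BinaryTree.node _ t₁ t₂, u, h => by
    simp only [insS, Finset.mem_union, Finset.mem_image, Finset.mem_singleton] at h
    rcases h with ⟨w, hw, rfl⟩ | rfl
    · have := numNodes_of_mem_insS t₂ w hw
      simp only [Tree.numNodes, BinaryTree.numNodes, Tree.node, Tree.nil, this]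
      omega
    · simp only [Tree.numNodes, BinaryTree.numNodes, Tree.node, Tree.nil]

lemma exists_insS : ∀ u₂ u₁ : Tree Unit,
    ∃ t : Tree Unit, t.numNodes + 1 = (Tree.node () u₁ u₂).numNodes ∧
      Tree.node () u₁ u₂ ∈ insS t := by
  intro u₂
  induction u₂ with
  | nil =>
    intro u₁
    refine ⟨u₁, by simp [Tree.numNodes], ?_⟩
    cases u₁ with
    | nil => simp [insS]
    | node a b c => simp [insS]
  | node a v₁ v₂ ih₁ ih₂ =>
    intro u₁
    obtain ⟨w, hw, hmem⟩ := ih₂ v₁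
    refine ⟨Tree.node () u₁ w, ?_, ?_⟩
    · simp [Tree.numNodes] at hw ⊢; omega
    · simp only [insS, Finset.mem_union, Finset.mem_image]
      exact Or.inl ⟨_, hmem, rfl⟩

lemma node_ne_self (t₁ t₂ : Tree Unit) : t₁ ≠ Tree.node () t₁ t₂ := by
  intro h
  have := congrArg Tree.numNodes h
  simp [Tree.numNodes] at this
  omega

lemma m_delta_one {m : V →ₗ[ℚ] V →ₗ[ℚ] V} (hm : IsLodayRoncoProduct m) :
    ∀ t : Tree Unit, m (δ t) (δ (Tree.node () Tree.nil Tree.nil)) = ∑ u ∈ insS t, δ u := by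
  intro t
  induction t with
  | nil => simpa [insS] using (hm.1 (Tree.node () Tree.nil Tree.nil)).2
  | node a t₁ t₂ ih₁ ih₂ =>
    have h := hm.2 t₁ t₂ Tree.nil Tree.nil
    rw [(hm.1 (Tree.node () t₁ t₂)).1] at h
    rw [ih₂] at h
    rw [h]
    have hL : Ltree t₁ (∑ u ∈ insS t₂, δ u) = ∑ u ∈ insS t₂, δ (Tree.node () t₁ u) := by
      rw [map_sum]
      refine Finset.sum_congr rfl fun u _ => ?_
      simp [Ltree, δ, Finsupp.lmapDomain, Finsupp.mapDomain_single]
    have hR : Rtree Tree.nil (δ (Tree.node () t₁ t₂)) =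
        δ (Tree.node () (Tree.node () t₁ t₂) Tree.nil) := by
      simp [Rtree, δ, Finsupp.lmapDomain, Finsupp.mapDomain_single]
    rw [hL, hR]
    rw [show insS (Tree.node a t₁ t₂) =
        (insS t₂).image (Tree.node () t₁) ∪ {Tree.node () (Tree.node () t₁ t₂) Tree.nil}
      from rfl]
    rw [Finset.sum_union, Finset.sum_image, Finset.sum_singleton]
    · intro x _ y _ h; injection h
    · rw [Finset.disjoint_singleton_right]
      simp only [Finset.mem_image, not_exists, not_and]
      intro x hx h
      injection h with _ h1 h2
      exact node_ne_self t₁ t₂ h1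

lemma sum_delta_apply (s : Finset (Tree Unit)) (w : Tree Unit) :
    (∑ u ∈ s, δ u) w = if w ∈ s then 1 else 0 := by
  rw [Finsupp.finset_sum_apply]
  simp only [δ, Finsupp.single_apply]
  exact Finset.sum_ite_eq' s w (fun _ => 1)

lemma numNodes_eq_one {t : Tree Unit} (h : t.numNodes = 1) :
    t = Tree.node () Tree.nil Tree.nil := by
  cases t with
  | nil => simp [Tree.numNodes] at h
  | node a b c =>
    simp [Tree.numNodes] at h
    obtain ⟨hb, hc⟩ := h
    cases b with
    | nil => cases c with
      | nil => rfl
      | node => simp [Tree.numNodes] at hc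
    | node => simp [Tree.numNodes] at hb

lemma key {m : V →ₗ[ℚ] V →ₗ[ℚ] V} (hm : IsLodayRoncoProduct m) :
    ∀ n : ℕ, 1 ≤ n → ∀ u : Tree Unit,
      ∃ c : ℕ, nfoldOne m n u = (c : ℚ) ∧ (0 < c ↔ u.numNodes = n) := by
  intro n
  induction n with
  | zero => omega
  | succ n ih =>
    intro _ u
    rcases Nat.eq_zero_or_pos n with rfl | hn
    · -- base case n+1 = 1
      by_cases h : u = Tree.node () Tree.nil Tree.nil
      · subst h
        exact ⟨1, by simp [nfoldOne, δ], by simp [Tree.numNodes]⟩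
      · refine ⟨0, ?_, ?_⟩
        · simp [nfoldOne, δ, Finsupp.single_apply]
          intro h'; exact absurd h'.symm h
        · simp only [Nat.lt_irrefl, false_iff]
          exact fun hc => h (numNodes_eq_one hc)
    · -- inductive step
      have hstep : nfoldOne m (n + 1) =
          m (nfoldOne m n) (δ (Tree.node () Tree.nil Tree.nil)) := by
        obtain ⟨k, rfl⟩ := Nat.exists_eq_succ_of_ne_zero hn.ne'
        rfl
      set v := nfoldOne m n with hv
      choose c hc hcpos using ih hn
      have hsupp : ∀ t : Tree Unit, v t = (c t : ℚ) := hc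
      have hexp : nfoldOne m (n + 1) =
          ∑ t ∈ v.support, (c t : ℚ) • (∑ u ∈ insS t, δ u) := by
        rw [hstep]
        conv_lhs => rw [← Finsupp.sum_single v]
        rw [Finsupp.sum, map_sum, LinearMap.coe_sum, Finset.sum_apply]
        refine Finset.sum_congr rfl fun t _ => ?_
        rw [show Finsupp.single t (v t) = (v t) • δ t by
          simp [δ, Finsupp.smul_single]]
        rw [map_smul, LinearMap.smul_apply, m_delta_one hm t, hsupp t]
      refine ⟨∑ t ∈ v.support, c t * (if u ∈ insS t then 1 else 0), ?_, ?_⟩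
      · rw [hexp, Finsupp.finset_sum_apply]
        push_cast
        refine Finset.sum_congr rfl fun t _ => ?_
        rw [Pi.smul_apply, Finset.sum_apply, smul_eq_mul]
        congr 1
        simp only [δ, Finsupp.single_apply]
        exact Finset.sum_ite_eq' _ u (fun _ => 1)
      · constructor
        · intro hpos
          obtain ⟨t, ht, htne⟩ := Finset.exists_ne_zero_of_sum_ne_zero hpos.ne'
          by_cases hins : u ∈ insS t
          · have h1 := numNodes_of_mem_insS t u hins
            have hct : c t ≠ 0 := by
              have h0 := Finsupp.mem_support_iff.mp ht
              rw [hsupp t] at h0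
              exact_mod_cast h0
            have h2 : t.numNodes = n := (hcpos t).mp (Nat.pos_of_ne_zero hct)
            omega
          · simp [hins] at htne
        · intro hnum
          have hune : u ≠ Tree.nil := by
            intro h; subst h; simp [Tree.numNodes] at hnum
          obtain ⟨a, u₁, u₂, rfl⟩ : ∃ a u₁ u₂, u = Tree.node a u₁ u₂ := by
            cases u with
            | nil => exact absurd rfl hune
            | node a b c => exact ⟨a, b, c, rfl⟩
          obtain ⟨t, htn, htmem⟩ := exists_insS u₂ u₁
          have htn' : t.numNodes = n := by rw [hnum] at htn; omega
          have hcpos' : 0 < c t := (hcpos t).mpr htn'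
          have hts : t ∈ v.support := by
            rw [Finsupp.mem_support_iff, hsupp t]
            exact_mod_cast hcpos'.ne'
          refine Finset.sum_pos' (fun i _ => Nat.zero_le _) ⟨t, hts, ?_⟩
          simp [htmem, hcpos']

/-- The support of the `n`-fold product `𝟙 ∗ ⋯ ∗ 𝟙` is exactly the set of planar binary
trees with `n` internal nodes, and every coefficient is a positive integer. -/
theorem nfoldOne_support_eq_and_coeff_pos (m : V →ₗ[ℚ] V →ₗ[ℚ] V)
    (hm : IsLodayRoncoProduct m) (n : ℕ) (hn : 1 ≤ n) :
    (nfoldOne m n).support = Tree.treesOfNumNodesEq n ∧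
    ∀ t ∈ Tree.treesOfNumNodesEq n, ∃ c : ℕ, 0 < c ∧ nfoldOne m n t = (c : ℚ) := by
  constructor
  · ext t
    rw [Finsupp.mem_support_iff, BinaryTree.mem_treesOfNumNodesEq]
    obtain ⟨c, hc, hiff⟩ := key hm n hn t
    rw [hc]
    rw [← hiff]
    constructor
    · intro h; exact_mod_cast Nat.pos_of_ne_zero (by exact_mod_cast h)
    · intro h; exact_mod_cast h.ne'
  · intro t ht
    obtain ⟨c, hc, hiff⟩ := key hm n hn t
    exact ⟨c, hiff.mpr (BinaryTree.mem_treesOfNumNodesEq.mp ht), hc⟩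
end
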